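/- Let F be a field, n ≥ 1, t ≥ 2, σ ∈ {1,−1}, let λB+A be a pencil of size (t+1)n×(t+1)n over F, and let L(λ) be the associated modified block Kronecker pencil. Suppose (Λ̂_t(λ)^T⊗I_n)(λB+A)(Λ̂_t(λ)⊗I_n) = [[−P, λ^t P],[λ^t P, Q(λ)]] for some invertible matrix P ∈ F^{n×n} and some n×n matrix polynomial Q(λ) of grade 2t−1. Then L(λ) is a strong linearization of the grade-2t matrix polynomial P(λ) := λ^{2t} P + Q(λ): there exist unimodular U(λ), V(λ) with U(λ)L(λ)V(λ) = diag(I_{(2t−1)n}, P(λ)), and there exist unimodular U′(λ), V′(λ) with U′(λ)(rev_1 L)(λ)V′(λ) = diag(I_{(2t−1)n}, rev_{2t} P(λ)). -/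

import Mathlib

open Polynomial Matrix
open scoped Kronecker

noncomputable section

/-- Entrywise inclusion of a constant matrix into polynomial matrices. -/
def matC {F : Type} [Field F] {m l : Type*} (M : Matrix m l F) : Matrix m l (Polynomial F) :=
  M.map fun a => (C a : Polynomial F)

/-- The pencil `λ ↦ A + λ B`, represented as a matrix over `F[λ]`. -/
def pencil {F : Type} [Field F] {m l : Type*} (A B : Matrix m l F) :
    Matrix m l (Polynomial F) :=
  matC A + (X : Polynomial F) • matC B

/-- Grade-`g` reversal `rev_g`, applied entrywise. -/
def revMat {F : Type} [Field F] {m l : Type*} (g : ℕ) (M : Matrix m l (Polynomial F)) :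
    Matrix m l (Polynomial F) :=
  M.map fun q => q.reflect g

/-- Entrywise evaluation of a polynomial matrix at a point. -/
def evalMat {F : Type} [Field F] {m l : Type*} (a : F) (M : Matrix m l (Polynomial F)) :
    Matrix m l F :=
  M.map fun q => q.eval a

/-- The matrix polynomial `P(λ) = ∑_{k=0}^d λ^k P_k` built from its coefficients. -/
def polyOfCoeffs {F : Type} [Field F] {n : ℕ} (d : ℕ) (Pc : ℕ → Matrix (Fin n) (Fin n) F) :
    Matrix (Fin n) (Fin n) (Polynomial F) :=
  ∑ k ∈ Finset.range (d + 1), (X : Polynomial F) ^ k • matC (Pc k)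

/-- The `(i,j)` block of a block-partitioned matrix. -/
def blk {α p q n m : Type*} (A : Matrix (p × n) (q × m) α) (i : p) (j : q) :
    Matrix n m α :=
  Matrix.of fun r c => A (i, r) (j, c)

/-- `Λ_s(λ) ⊗ I_n`, an `(s+1)n × n` polynomial matrix whose `i`-th block is `λ^{s-i} I_n`. -/
def Lam (F : Type) [Field F] (s n : ℕ) :
    Matrix (Fin (s+1) × Fin n) (Fin n) (Polynomial F) :=
  Matrix.of fun p c => if p.2 = c then (X : Polynomial F) ^ (s - (p.1 : ℕ)) else 0

/-- The pencil `L_s(λ) ∈ F[λ]^{s×(s+1)}` with `-1` on the diagonal and `λ` on the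
superdiagonal. -/
def Lpen (F : Type) [Field F] (s : ℕ) : Matrix (Fin s) (Fin (s+1)) (Polynomial F) :=
  Matrix.of fun i j =>
    if (j : ℕ) = (i : ℕ) then -1 else if (j : ℕ) = (i : ℕ) + 1 then X else 0

/-- The block Kronecker pencil `[[λB+A, L_s(λ)ᵀ⊗I_n],[σ L_s(λ)⊗I_n, 0]]` associated with a
pencil `M = λB+A` of size `(s+1)n × (s+1)n`. -/
def blockKron (F : Type) [Field F] (s n : ℕ) (σ : F)
    (M : Matrix (Fin (s+1) × Fin n) (Fin (s+1) × Fin n) (Polynomial F)) :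
    Matrix ((Fin (s+1) × Fin n) ⊕ (Fin s × Fin n)) ((Fin (s+1) × Fin n) ⊕ (Fin s × Fin n))
      (Polynomial F) :=
  Matrix.fromBlocks M (Lpen F s ⊗ₖ (1 : Matrix (Fin n) (Fin n) (Polynomial F)))ᵀ
    (σ • (Lpen F s ⊗ₖ (1 : Matrix (Fin n) (Fin n) (Polynomial F)))) 0

/-- `L` is a linearization of `P`: there are unimodular `U`, `V` with
`U L V = diag(I_m, P)` (up to the fixed identification of index sets). -/
def IsLinearization {F : Type} [Field F] (m : ℕ) {ι ρ : Type*} [Fintype ι] [DecidableEq ι]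
    [Fintype ρ] [DecidableEq ρ] (L : Matrix ι ι (Polynomial F))
    (P : Matrix ρ ρ (Polynomial F)) : Prop :=
  ∃ (e : (Fin m ⊕ ρ) ≃ ι) (U V : Matrix ι ι (Polynomial F)),
    IsUnit U.det ∧ IsUnit V.det ∧
      U * L * V =
        (Matrix.fromBlocks (1 : Matrix (Fin m) (Fin m) (Polynomial F)) 0 0 P).submatrix
          e.symm e.symm

/-- The block conditions `∑_{i+j=d+2-k} B_{ij} + ∑_{i+j=d+1-k} A_{ij} = P_k` for
`k = 0,…,d` (blocks are indexed here `0`-based, so `i+j` `1`-based is `i+j+2` `0`-based). -/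
def blockConds {F : Type} [Field F] {s n : ℕ} (d : ℕ) (Pc : ℕ → Matrix (Fin n) (Fin n) F)
    (A B : Matrix (Fin (s+1) × Fin n) (Fin (s+1) × Fin n) F) : Prop :=
  ∀ k, k ≤ d →
    (∑ p ∈ Finset.univ.filter
        (fun p : Fin (s+1) × Fin (s+1) => (p.1 : ℕ) + (p.2 : ℕ) + 2 + k = d + 2),
        blk B p.1 p.2) +
      (∑ p ∈ Finset.univ.filter
        (fun p : Fin (s+1) × Fin (s+1) => (p.1 : ℕ) + (p.2 : ℕ) + 2 + k = d + 1),
        blk A p.1 p.2) = Pc k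

/-- `L̂_t(λ) ⊗ I_n` (with `t = u+1`): first block column zero, remaining block columns
`L_{t-1}(λ) ⊗ I_n`; the column index is split as `Fin n ⊕ (Fin t × Fin n)`. -/
def LhatB (F : Type) [Field F] (u n : ℕ) :
    Matrix (Fin u × Fin n) (Fin n ⊕ Fin (u+1) × Fin n) (Polynomial F) :=
  Matrix.of fun p q =>
    match q with
    | Sum.inl _ => 0
    | Sum.inr c => (Lpen F u ⊗ₖ (1 : Matrix (Fin n) (Fin n) (Polynomial F))) p c

/-- The modified block Kronecker pencil `[[λB+A, L̂_t(λ)ᵀ⊗I_n],[σ L̂_t(λ)⊗I_n, 0]]`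
(with `t = u+1`). -/
def modBK (F : Type) [Field F] (u n : ℕ) (σ : F)
    (M : Matrix (Fin n ⊕ Fin (u+1) × Fin n) (Fin n ⊕ Fin (u+1) × Fin n) (Polynomial F)) :
    Matrix ((Fin n ⊕ Fin (u+1) × Fin n) ⊕ Fin u × Fin n)
      ((Fin n ⊕ Fin (u+1) × Fin n) ⊕ Fin u × Fin n) (Polynomial F) :=
  Matrix.fromBlocks M (LhatB F u n)ᵀ (σ • LhatB F u n) 0

/-- `Λ̂_t(λ) ⊗ I_n` (with `t = u+1`): the `(t+1)n × 2n` polynomial matrix whose transpose has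
block rows `(I_n, 0, …, 0)` and `(0, λ^{t-1}I_n, …, λ I_n, I_n)`. -/
def LamHatB (F : Type) [Field F] (u n : ℕ) :
    Matrix (Fin n ⊕ Fin (u+1) × Fin n) (Fin 2 × Fin n) (Polynomial F) :=
  Matrix.of fun q c =>
    match q with
    | Sum.inl r => if c.1 = 0 ∧ c.2 = r then 1 else 0
    | Sum.inr p => if c.1 = 1 ∧ c.2 = p.2 then (X : Polynomial F) ^ (u - (p.1 : ℕ)) else 0

/-- `Λ̃_t(λ) ⊗ I_n` (with `t = u+1`): the `(t+1)n × 2n` polynomial matrix whose transpose has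
block rows `(I_n, 0, …, 0)` and `(0, I_n, λ I_n, …, λ^{t-1} I_n)`. -/
def LamTildeB (F : Type) [Field F] (u n : ℕ) :
    Matrix (Fin n ⊕ Fin (u+1) × Fin n) (Fin 2 × Fin n) (Polynomial F) :=
  Matrix.of fun q c =>
    match q with
    | Sum.inl r => if c.1 = 0 ∧ c.2 = r then 1 else 0
    | Sum.inr p => if c.1 = 1 ∧ c.2 = p.2 then (X : Polynomial F) ^ (p.1 : ℕ) else 0

/-- A `2n × 2n` matrix assembled from four `n × n` blocks, indexed by `Fin 2 × Fin n`. -/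
def twoBlock {α : Type*} {n : ℕ} (W₁₁ W₁₂ W₂₁ W₂₂ : Matrix (Fin n) (Fin n) α) :
    Matrix (Fin 2 × Fin n) (Fin 2 × Fin n) α :=
  Matrix.of fun p q =>
    if p.1 = 0 then (if q.1 = 0 then W₁₁ p.2 q.2 else W₁₂ p.2 q.2)
    else (if q.1 = 0 then W₂₁ p.2 q.2 else W₂₂ p.2 q.2)

/-- `Λ_t(λ) ⊗ I_n` (with `t = u+1`), over the split row index `Fin n ⊕ (Fin t × Fin n)`:
block entries `λ^t I_n, λ^{t-1} I_n, …, λ I_n, I_n`. -/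
def LamFullB (F : Type) [Field F] (u n : ℕ) :
    Matrix (Fin n ⊕ Fin (u+1) × Fin n) (Fin n) (Polynomial F) :=
  Matrix.of fun q c =>
    match q with
    | Sum.inl r => if r = c then (X : Polynomial F) ^ (u + 1) else 0
    | Sum.inr p => if p.2 = c then (X : Polynomial F) ^ (u - (p.1 : ℕ)) else 0

/-- `N̂_t(λ) = Ĥ_t(λ) ⊗ I_n` (with `t = u+1`): `Ĥ_t ∈ F[λ]^{(t-1)×(t+1)}` has `(i,j)` entry
`λ^{i+1-j}` if `2 ≤ j ≤ i+1` and `0` otherwise. -/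
def NhatB (F : Type) [Field F] (u n : ℕ) :
    Matrix (Fin u × Fin n) (Fin n ⊕ Fin (u+1) × Fin n) (Polynomial F) :=
  Matrix.of fun p q =>
    match q with
    | Sum.inl _ => 0
    | Sum.inr c =>
        if (c.1 : ℕ) ≤ (p.1 : ℕ) ∧ p.2 = c.2 then
          (X : Polynomial F) ^ ((p.1 : ℕ) - (c.1 : ℕ)) else 0

end

namespace Stmt10

variable {R : Type*} [CommRing R]

/-- Unimodular (two-sided invertible, possibly cross-type) equivalence of square matrices. -/
def MEq {α β : Type*} [Fintype α] [Fintype β] [DecidableEq α] [DecidableEq β]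
    (A : Matrix α α R) (B : Matrix β β R) : Prop :=
  ∃ (U : Matrix β α R) (V : Matrix α β R) (U' : Matrix α β R) (V' : Matrix β α R),
    U * U' = 1 ∧ U' * U = 1 ∧ V * V' = 1 ∧ V' * V = 1 ∧ U * A * V = B

lemma inv_comp {α β γ : Type*} [Fintype α] [Fintype β] [Fintype γ] [DecidableEq β] [DecidableEq γ]
    {A : Matrix β α R} {A' : Matrix α β R} {B : Matrix γ β R} {B' : Matrix β γ R}
    (h1 : A * A' = 1) (h2 : B * B' = 1) : (B * A) * (A' * B') = 1 := by
  rw [Matrix.mul_assoc, ← Matrix.mul_assoc A, h1, Matrix.one_mul, h2]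

lemma MEq.trans {α β γ : Type*} [Fintype α] [Fintype β] [Fintype γ]
    [DecidableEq α] [DecidableEq β] [DecidableEq γ]
    {A : Matrix α α R} {B : Matrix β β R} {C : Matrix γ γ R}
    (h : MEq A B) (h' : MEq B C) : MEq A C := by
  obtain ⟨U₁, V₁, U₁', V₁', a1, a2, a3, a4, a5⟩ := h
  obtain ⟨U₂, V₂, U₂', V₂', b1, b2, b3, b4, b5⟩ := h'
  refine ⟨U₂ * U₁, V₁ * V₂, U₁' * U₂', V₂' * V₁', inv_comp a1 b1, inv_comp b2 a2,
    inv_comp b3 a3, inv_comp a4 b4, ?_⟩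
  rw [← b5, ← a5]
  simp only [Matrix.mul_assoc]

lemma MEq.symm {α β : Type*} [Fintype α] [Fintype β] [DecidableEq α] [DecidableEq β]
    {A : Matrix α α R} {B : Matrix β β R} (h : MEq A B) : MEq B A := by
  obtain ⟨U, V, U', V', a1, a2, a3, a4, a5⟩ := h
  refine ⟨U', V', U, V, a2, a1, a4, a3, ?_⟩
  rw [← a5]
  calc U' * (U * A * V) * V' = (U' * U) * A * (V * V') := by simp only [Matrix.mul_assoc]
  _ = A := by rw [a2, a3, Matrix.one_mul, Matrix.mul_one]

lemma MEq.of_unimodular {α : Type*} [Fintype α] [DecidableEq α]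
    {A B U V : Matrix α α R} (hU : IsUnit U.det) (hV : IsUnit V.det)
    (h : U * A * V = B) : MEq A B :=
  ⟨U, V, U⁻¹, V⁻¹, Matrix.mul_nonsing_inv _ hU, Matrix.nonsing_inv_mul _ hU,
    Matrix.mul_nonsing_inv _ hV, Matrix.nonsing_inv_mul _ hV, h⟩

lemma one_submatrix_mul {α β γ : Type*} [Fintype α] [DecidableEq α] [Fintype γ]
    (e : β → α) (M : Matrix α γ R) :
    (1 : Matrix α α R).submatrix e id * M = M.submatrix e id := by
  ext i j
  simp [Matrix.mul_apply, Matrix.one_apply, ite_mul, Finset.sum_ite_eq]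

lemma submatrix_mul_id_left {α β γ δ : Type*} [Fintype α]
    (U : Matrix β α R) (L : Matrix α γ R) (f : δ → β) :
    (U.submatrix f id) * L = (U * L).submatrix f id := by
  ext i j; simp [Matrix.mul_apply]

lemma mul_submatrix_id_right {α β γ δ : Type*} [Fintype α]
    (L : Matrix γ α R) (V : Matrix α β R) (g : δ → β) :
    L * V.submatrix id g = (L * V).submatrix id g := by
  ext i j; simp [Matrix.mul_apply]

lemma one_sub_swap {α β : Type*} [Fintype α] [DecidableEq α] [Fintype β] [DecidableEq β]
    (e : β ≃ α) :
    (1 : Matrix α α R).submatrix id ⇑e = (1 : Matrix β β R).submatrix ⇑e.symm id := by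
  ext i j
  by_cases h : i = e j
  · simp [Matrix.one_apply, h]
  · show (1 : Matrix α α R) i (e j) = (1 : Matrix β β R) (e.symm i) j
    rw [Matrix.one_apply_ne h, Matrix.one_apply_ne (by simpa [Equiv.symm_apply_eq] using h)]

lemma MEq.submatrix {α β : Type*} [Fintype α] [DecidableEq α] [Fintype β] [DecidableEq β]
    (e : β ≃ α) (A : Matrix α α R) : MEq A (A.submatrix e e) := by
  refine ⟨(1 : Matrix α α R).submatrix e id, (1 : Matrix α α R).submatrix id ⇑e,
    (1 : Matrix α α R).submatrix id ⇑e, (1 : Matrix α α R).submatrix e id, ?_, ?_, ?_, ?_, ?_⟩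
  · rw [one_submatrix_mul, Matrix.submatrix_submatrix]
    ext i j
    simp [Matrix.one_apply, Equiv.apply_eq_iff_eq]
  · rw [one_sub_swap e, one_submatrix_mul, Matrix.submatrix_submatrix]
    ext i j
    simp [Matrix.one_apply]
  · rw [one_sub_swap e, one_submatrix_mul, Matrix.submatrix_submatrix]
    ext i j
    simp [Matrix.one_apply]
  · rw [one_submatrix_mul, Matrix.submatrix_submatrix]
    ext i j
    simp [Matrix.one_apply, Equiv.apply_eq_iff_eq]
  · rw [one_submatrix_mul, submatrix_mul_id_left, mul_submatrix_id_right,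
      Matrix.submatrix_submatrix]
    ext i j
    simp [Matrix.mul_apply, Matrix.one_apply, mul_ite, Finset.sum_ite_eq']

lemma MEq.fromBlocks_congr {α β γ : Type*} [Fintype α] [Fintype β] [Fintype γ]
    [DecidableEq α] [DecidableEq β] [DecidableEq γ]
    {Z : Matrix α α R} {Z' : Matrix β β R} (h : MEq Z Z') :
    MEq (Matrix.fromBlocks Z 0 0 (1 : Matrix γ γ R)) (Matrix.fromBlocks Z' 0 0 (1 : Matrix γ γ R)) := by
  obtain ⟨U, V, U', V', a1, a2, a3, a4, a5⟩ := h
  refine ⟨Matrix.fromBlocks U 0 0 (1 : Matrix γ γ R), Matrix.fromBlocks V 0 0 (1 : Matrix γ γ R),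
    Matrix.fromBlocks U' 0 0 (1 : Matrix γ γ R), Matrix.fromBlocks V' 0 0 (1 : Matrix γ γ R),
    ?_, ?_, ?_, ?_, ?_⟩
  · rw [Matrix.fromBlocks_multiply]; simp [a1, Matrix.fromBlocks_one]
  · rw [Matrix.fromBlocks_multiply]; simp [a2, Matrix.fromBlocks_one]
  · rw [Matrix.fromBlocks_multiply]; simp [a3, Matrix.fromBlocks_one]
  · rw [Matrix.fromBlocks_multiply]; simp [a4, Matrix.fromBlocks_one]
  · rw [Matrix.fromBlocks_multiply, Matrix.fromBlocks_multiply, ← a5]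
    simp [Matrix.mul_assoc]


def sh3' (α β ρ : Type*) : (α ⊕ ρ) ⊕ β ≃ (α ⊕ β) ⊕ ρ where
  toFun x := match x with
    | .inl (.inl a) => .inl (.inl a)
    | .inl (.inr r) => .inr r
    | .inr b => .inl (.inr b)
  invFun y := match y with
    | .inl (.inl a) => .inl (.inl a)
    | .inl (.inr b) => .inr b
    | .inr r => .inl (.inr r)
  left_inv := by rintro ((a | r) | b) <;> rfl
  right_inv := by rintro ((a | b) | r) <;> rfl
/-- reorder `(ι₂ ⊕ ρ) ⊕ ι₂` as `ρ ⊕ (ι₂ ⊕ ι₂)` -/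
def sh3 (A C : Type*) : (C ⊕ (A ⊕ A)) ≃ ((A ⊕ C) ⊕ A) where
  toFun x := match x with
    | .inl r => .inl (.inr r)
    | .inr (.inl j) => .inl (.inl j)
    | .inr (.inr j) => .inr j
  invFun y := match y with
    | .inl (.inl j) => .inr (.inl j)
    | .inl (.inr r) => .inl r
    | .inr j => .inr (.inr j)
  left_inv := by rintro (r | (j | j)) <;> rfl
  right_inv := by rintro ((j | r) | j) <;> rfl

lemma master {ι₁' ι₂' ρ' : Type*} [Fintype ι₁'] [DecidableEq ι₁'] [Fintype ι₂'] [DecidableEq ι₂']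
    [Fintype ρ'] [DecidableEq ρ'] {F : Type} [Field F]
    (M : Matrix ι₁' ι₁' (Polynomial F)) (K : Matrix ι₂' ι₁' (Polynomial F))
    (Nm : Matrix ι₁' ι₂' (Polynomial F)) (Λm : Matrix ι₁' ρ' (Polynomial F))
    (W' : Matrix (ι₂' ⊕ ρ') ι₁' (Polynomial F))
    (σ : F) (hσ : σ * σ = 1) (g : ι₁' ≃ (ι₂' ⊕ ρ'))
    (hW' : W' * Matrix.fromCols Nm Λm = 1)
    (hKN : K * Nm = 1) (hKΛ : K * Λm = 0) :
    MEq (Matrix.fromBlocks M Kᵀ (σ • K) (0 : Matrix ι₂' ι₂' (Polynomial F)))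
      (Matrix.fromBlocks (Λmᵀ * M * Λm) 0 0
        (1 : Matrix (ι₂' ⊕ ι₂') (ι₂' ⊕ ι₂') (Polynomial F))) := by
  set W : Matrix ι₁' (ι₂' ⊕ ρ') (Polynomial F) := Matrix.fromCols Nm Λm with hW
  -- two-sided invertibility of W
  have hWW : W * W' = 1 := by
    have h1 : (W'.submatrix ⇑g id) * (W.submatrix id ⇑g) = 1 := by
      have := Matrix.submatrix_mul_equiv W' W (⇑g) (Equiv.refl ι₁') (⇑g)
      simp only [Equiv.coe_refl] at this
      rw [this, hW']
      exact Matrix.submatrix_one_equiv g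
    have h2 : (W.submatrix id ⇑g) * (W'.submatrix ⇑g id) = 1 := mul_eq_one_comm.mp h1
    have h3 : (W * W').submatrix (id : ι₁' → ι₁') (id : ι₁' → ι₁') = 1 := by
      rw [← Matrix.submatrix_mul_equiv W W' id g id]
      exact h2
    simpa using h3
  -- the blocks of Wᵀ * M * W
  have hXblocks : Wᵀ * M * W =
      Matrix.fromBlocks (Nmᵀ * M * Nm) (Nmᵀ * M * Λm) (Λmᵀ * M * Nm) (Λmᵀ * M * Λm) := by
    rw [hW, Matrix.transpose_fromCols, Matrix.fromRows_mul, Matrix.fromRows_mul,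
      Matrix.mul_fromCols, Matrix.mul_fromCols, Matrix.fromRows_fromCols_eq_fromBlocks]
  set X11 := Nmᵀ * M * Nm with hX11
  set X12 := Nmᵀ * M * Λm with hX12
  set X21 := Λmᵀ * M * Nm with hX21
  set Z := Λmᵀ * M * Λm with hZdef
  set E : Matrix ι₂' (ι₂' ⊕ ρ') (Polynomial F) := Matrix.fromCols 1 0 with hE
  have hKW : K * W = E := by rw [hW, Matrix.mul_fromCols, hKN, hKΛ, hE]
  have hKWt : Wᵀ * Kᵀ = Eᵀ := by rw [← Matrix.transpose_mul, hKW]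
  -- step 1 : conjugate by diag(W, 1)
  have step1 : MEq (Matrix.fromBlocks M Kᵀ (σ • K) (0 : Matrix ι₂' ι₂' (Polynomial F)))
      (Matrix.fromBlocks (Matrix.fromBlocks X11 X12 X21 Z) Eᵀ (σ • E) 0) := by
    refine ⟨Matrix.fromBlocks Wᵀ 0 0 (1 : Matrix ι₂' ι₂' (Polynomial F)),
      Matrix.fromBlocks W 0 0 (1 : Matrix ι₂' ι₂' (Polynomial F)),
      Matrix.fromBlocks W'ᵀ 0 0 (1 : Matrix ι₂' ι₂' (Polynomial F)),
      Matrix.fromBlocks W' 0 0 (1 : Matrix ι₂' ι₂' (Polynomial F)), ?_, ?_, ?_, ?_, ?_⟩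
    · rw [Matrix.fromBlocks_multiply]
      simp only [← Matrix.transpose_mul, hW', Matrix.mul_zero, Matrix.zero_mul,
        Matrix.mul_one, Matrix.one_mul, add_zero, zero_add, Matrix.transpose_one]
      exact Matrix.fromBlocks_one
    · rw [Matrix.fromBlocks_multiply]
      simp only [← Matrix.transpose_mul, hWW, Matrix.mul_zero, Matrix.zero_mul,
        Matrix.mul_one, Matrix.one_mul, add_zero, zero_add, Matrix.transpose_one]
      exact Matrix.fromBlocks_one
    · rw [Matrix.fromBlocks_multiply]
      simp only [hWW, Matrix.mul_zero, Matrix.zero_mul, Matrix.mul_one, Matrix.one_mul,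
        add_zero, zero_add]
      exact Matrix.fromBlocks_one
    · rw [Matrix.fromBlocks_multiply]
      simp only [hW', Matrix.mul_zero, Matrix.zero_mul, Matrix.mul_one, Matrix.one_mul,
        add_zero, zero_add]
      exact Matrix.fromBlocks_one
    · rw [Matrix.fromBlocks_multiply, Matrix.fromBlocks_multiply]
      simp only [Matrix.mul_zero, Matrix.zero_mul, Matrix.mul_one, Matrix.one_mul,
        add_zero, zero_add]
      rw [hXblocks, hKWt, Matrix.smul_mul, hKW]
  -- step 2 : clear the X11, X12, X21 blocks
  have step2 : MEq (Matrix.fromBlocks (Matrix.fromBlocks X11 X12 X21 Z) Eᵀ (σ • E) 0)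
      (Matrix.fromBlocks (Matrix.fromBlocks 0 0 0 Z) Eᵀ (σ • E) 0) := by
    set T : Matrix (ι₂' ⊕ ρ') ι₂' (Polynomial F) := Matrix.fromRows 0 (-(σ • X21)) with hT
    set Y : Matrix ι₂' (ι₂' ⊕ ρ') (Polynomial F) := Matrix.fromCols (-X11) (-X12) with hY
    have hTE : T * (σ • E) = Matrix.fromBlocks 0 0 (-X21) 0 := by
      rw [Matrix.mul_smul, hT, hE, Matrix.fromRows_mul, Matrix.mul_fromCols,
        Matrix.mul_fromCols]
      simp only [Matrix.zero_mul, Matrix.mul_zero, Matrix.mul_one, Matrix.neg_mul]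
      rw [show (Matrix.fromRows (Matrix.fromCols (0 : Matrix ι₂' ι₂' (Polynomial F)) 0)
          (Matrix.fromCols (-(σ • X21)) 0) : Matrix (ι₂' ⊕ ρ') (ι₂' ⊕ ρ') (Polynomial F)) =
          Matrix.fromBlocks 0 0 (-(σ • X21)) 0 from
        Matrix.fromRows_fromCols_eq_fromBlocks 0 0 (-(σ • X21)) 0]
      rw [Matrix.fromBlocks_smul]
      simp only [smul_zero, smul_neg, smul_smul, hσ, one_smul]
    have hEY : Eᵀ * Y = Matrix.fromBlocks (-X11) (-X12) 0 0 := by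
      rw [hE, Matrix.transpose_fromCols, Matrix.transpose_one, Matrix.transpose_zero,
        Matrix.fromRows_mul, Matrix.one_mul, Matrix.zero_mul, hY,
        show (0 : Matrix ρ' (ι₂' ⊕ ρ') (Polynomial F)) = Matrix.fromCols 0 0 from
          Matrix.fromCols_zero.symm,
        Matrix.fromRows_fromCols_eq_fromBlocks]
    refine ⟨Matrix.fromBlocks 1 T 0 1, Matrix.fromBlocks 1 0 Y 1,
      Matrix.fromBlocks 1 (-T) 0 1, Matrix.fromBlocks 1 0 (-Y) 1, ?_, ?_, ?_, ?_, ?_⟩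
    · rw [Matrix.fromBlocks_multiply]
      simp only [Matrix.mul_zero, Matrix.zero_mul, Matrix.mul_one, Matrix.one_mul, neg_zero,
        add_zero, zero_add, smul_zero, Matrix.mul_neg, add_neg_cancel, neg_add_cancel]
      exact Matrix.fromBlocks_one
    · rw [Matrix.fromBlocks_multiply]
      simp only [Matrix.mul_zero, Matrix.zero_mul, Matrix.mul_one, Matrix.one_mul, neg_zero,
        add_zero, zero_add, smul_zero, Matrix.neg_mul, add_neg_cancel, neg_add_cancel]
      exact Matrix.fromBlocks_one
    · rw [Matrix.fromBlocks_multiply]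
      simp only [Matrix.mul_zero, Matrix.zero_mul, Matrix.mul_one, Matrix.one_mul, neg_zero,
        add_zero, zero_add, smul_zero, Matrix.mul_neg, Matrix.neg_mul, add_neg_cancel,
        neg_add_cancel]
      exact Matrix.fromBlocks_one
    · rw [Matrix.fromBlocks_multiply]
      simp only [Matrix.mul_zero, Matrix.zero_mul, Matrix.mul_one, Matrix.one_mul, neg_zero,
        add_zero, zero_add, smul_zero, Matrix.mul_neg, Matrix.neg_mul, add_neg_cancel,
        neg_add_cancel]
      exact Matrix.fromBlocks_one
    · rw [Matrix.fromBlocks_multiply, Matrix.fromBlocks_multiply]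
      simp only [Matrix.mul_zero, Matrix.zero_mul, Matrix.mul_one, Matrix.one_mul,
        add_zero, zero_add]
      rw [hTE, hEY, Matrix.fromBlocks_add, Matrix.fromBlocks_add]
      simp only [add_zero, zero_add, add_neg_cancel]
  -- step 3 : reorder blocks
  have step3 : MEq (Matrix.fromBlocks (Matrix.fromBlocks 0 0 0 Z) Eᵀ (σ • E) 0)
      (Matrix.fromBlocks Z 0 0
        (Matrix.fromBlocks 0 1 (σ • (1 : Matrix ι₂' ι₂' (Polynomial F))) 0)) := by
    have := MEq.submatrix (R := Polynomial F) (sh3 ι₂' ρ')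
      (Matrix.fromBlocks (Matrix.fromBlocks 0 0 0 Z) Eᵀ (σ • E) 0)
    convert this using 2
    ext p q
    rcases p with (c | (j | j)) <;> rcases q with (d | (j' | j')) <;>
      simp [sh3, hE, Matrix.transpose_fromCols, Matrix.one_apply]
  -- step 4 : remove the antidiagonal identity blocks
  have step4 : MEq (Matrix.fromBlocks Z 0 0
        (Matrix.fromBlocks 0 1 (σ • (1 : Matrix ι₂' ι₂' (Polynomial F))) 0))
      (Matrix.fromBlocks Z 0 0 (1 : Matrix (ι₂' ⊕ ι₂') (ι₂' ⊕ ι₂') (Polynomial F))) := by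
    set Vc : Matrix (ι₂' ⊕ ι₂') (ι₂' ⊕ ι₂') (Polynomial F) := Matrix.fromBlocks 0 (σ • 1) 1 0 with hVc
    set Vc' : Matrix (ι₂' ⊕ ι₂') (ι₂' ⊕ ι₂') (Polynomial F) := Matrix.fromBlocks 0 1 (σ • 1) 0 with hVc'
    have h1 : Vc * Vc' = 1 := by
      rw [hVc, hVc', Matrix.fromBlocks_multiply]
      simp only [Matrix.mul_zero, Matrix.zero_mul, Matrix.mul_one, Matrix.one_mul, smul_zero,
        add_zero, zero_add, Matrix.smul_mul, Matrix.mul_smul, smul_smul, hσ, one_smul]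
      exact Matrix.fromBlocks_one
    have h2 : Vc' * Vc = 1 := by
      rw [hVc, hVc', Matrix.fromBlocks_multiply]
      simp only [Matrix.mul_zero, Matrix.zero_mul, Matrix.mul_one, Matrix.one_mul, smul_zero,
        add_zero, zero_add, Matrix.smul_mul, Matrix.mul_smul, smul_smul, hσ, one_smul]
      exact Matrix.fromBlocks_one
    refine ⟨1, Matrix.fromBlocks 1 0 0 Vc, 1, Matrix.fromBlocks 1 0 0 Vc', by simp, by simp,
      ?_, ?_, ?_⟩
    · rw [Matrix.fromBlocks_multiply]
      simp only [Matrix.mul_zero, Matrix.zero_mul, Matrix.mul_one, Matrix.one_mul,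
        add_zero, zero_add, smul_zero, h1]
      exact Matrix.fromBlocks_one
    · rw [Matrix.fromBlocks_multiply]
      simp only [Matrix.mul_zero, Matrix.zero_mul, Matrix.mul_one, Matrix.one_mul,
        add_zero, zero_add, smul_zero, h2]
      exact Matrix.fromBlocks_one
    · rw [Matrix.one_mul, Matrix.fromBlocks_multiply]
      simp only [Matrix.mul_zero, Matrix.zero_mul, Matrix.mul_one, Matrix.one_mul,
        add_zero, zero_add, smul_zero]
      rw [hVc, Matrix.fromBlocks_multiply]
      simp only [Matrix.mul_zero, Matrix.zero_mul, Matrix.mul_one, Matrix.one_mul,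
        add_zero, zero_add, smul_zero, Matrix.smul_mul, Matrix.mul_smul, smul_smul, hσ,
        one_smul]
      rw [Matrix.fromBlocks_one]
  exact ((step1.trans step2).trans step3).trans step4

lemma isLinearization_of_MEq {F : Type} [Field F] {m : ℕ} {ι ρ : Type*}
    [Fintype ι] [DecidableEq ι] [Fintype ρ] [DecidableEq ρ]
    {L : Matrix ι ι (Polynomial F)} {P : Matrix ρ ρ (Polynomial F)}
    (e : (Fin m ⊕ ρ) ≃ ι)
    (h : MEq L (Matrix.fromBlocks (1 : Matrix (Fin m) (Fin m) (Polynomial F)) 0 0 P)) :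
    IsLinearization m L P := by
  obtain ⟨U, V, U', V', a1, a2, a3, a4, a5⟩ := h
  refine ⟨e, U.submatrix ⇑e.symm id, V.submatrix id ⇑e.symm, ?_, ?_, ?_⟩
  · apply Matrix.isUnit_det_of_right_inverse (B := U'.submatrix id ⇑e.symm)
    rw [submatrix_mul_id_left, mul_submatrix_id_right, Matrix.submatrix_submatrix, a1]
    simpa using Matrix.submatrix_one_equiv e.symm
  · apply Matrix.isUnit_det_of_left_inverse (B := V'.submatrix ⇑e.symm id)
    rw [submatrix_mul_id_left, mul_submatrix_id_right, Matrix.submatrix_submatrix, a4]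
    simpa using Matrix.submatrix_one_equiv e.symm
  · rw [submatrix_mul_id_left, mul_submatrix_id_right, submatrix_mul_id_left,
      Matrix.submatrix_submatrix, a5]
    rfl

/-- merge nested identity blocks : `diag(diag(1_α, P), 1_β) ≈ diag(1_{α⊕β}, P)`. -/
lemma MEq_nested {α β ρ : Type*} [Fintype α] [DecidableEq α] [Fintype β] [DecidableEq β]
    [Fintype ρ] [DecidableEq ρ] (P : Matrix ρ ρ R) :
    MEq (Matrix.fromBlocks (Matrix.fromBlocks (1 : Matrix α α R) 0 0 P) 0 0
        (1 : Matrix β β R))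
      (Matrix.fromBlocks (1 : Matrix (α ⊕ β) (α ⊕ β) R) 0 0 P) := by
  have key : (Matrix.fromBlocks (1 : Matrix (α ⊕ β) (α ⊕ β) R) 0 0 P).submatrix
      (sh3' α β ρ) (sh3' α β ρ) =
      Matrix.fromBlocks (Matrix.fromBlocks (1 : Matrix α α R) 0 0 P) 0 0
        (1 : Matrix β β R) := by
    ext p q
    rcases p with ((a | r) | b) <;> rcases q with ((a' | r') | b') <;>
      simp [sh3', Matrix.one_apply]
  have := MEq.submatrix (sh3' α β ρ)
    (Matrix.fromBlocks (1 : Matrix (α ⊕ β) (α ⊕ β) R) 0 0 P)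
  rw [key] at this
  exact this.symm

/-- relabel the identity block. -/
lemma MEq_reindex_one {γ : Type*} [Fintype γ] [DecidableEq γ] {m : ℕ} {ρ : Type*}
    [Fintype ρ] [DecidableEq ρ] (f : γ ≃ Fin m) (P : Matrix ρ ρ R) :
    MEq (Matrix.fromBlocks (1 : Matrix γ γ R) 0 0 P)
      (Matrix.fromBlocks (1 : Matrix (Fin m) (Fin m) R) 0 0 P) := by
  have key : (Matrix.fromBlocks (1 : Matrix (Fin m) (Fin m) R) 0 0 P).submatrix
      (Equiv.sumCongr f (Equiv.refl ρ)) (Equiv.sumCongr f (Equiv.refl ρ)) =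
      Matrix.fromBlocks (1 : Matrix γ γ R) 0 0 P := by
    ext p q
    rcases p with (a | r) <;> rcases q with (a' | r') <;>
      simp [Matrix.one_apply, Equiv.apply_eq_iff_eq]
  have := MEq.submatrix (Equiv.sumCongr f (Equiv.refl ρ))
    (Matrix.fromBlocks (1 : Matrix (Fin m) (Fin m) R) 0 0 P)
  rw [key] at this
  exact this.symm

section Sums
variable {R : Type*} [CommRing R]

lemma fin_sum_two {m : ℕ} (a b : ℕ) (ha : a < m) (hb : b < m) (hab : a ≠ b)
    (f g : Fin m → R) :
    (∑ c : Fin m, (if (c : ℕ) = a then f c else if (c : ℕ) = b then g c else 0)) =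
      f ⟨a, ha⟩ + g ⟨b, hb⟩ := by
  have h : ∀ c : Fin m, (if (c : ℕ) = a then f c else if (c : ℕ) = b then g c else 0)
      = (if c = ⟨a, ha⟩ then f c else 0) + (if c = ⟨b, hb⟩ then g c else 0) := by
    intro c
    rcases eq_or_ne (c : ℕ) a with h1 | h1
    · have hc : c = ⟨a, ha⟩ := Fin.ext h1
      subst hc
      simp [hab]
    · have hca : c ≠ ⟨a, ha⟩ := fun hh => h1 (by rw [hh])
      rw [if_neg h1, if_neg hca, zero_add]
      rcases eq_or_ne (c : ℕ) b with h2 | h2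
      · rw [if_pos h2, if_pos (Fin.ext h2)]
      · have hcb : c ≠ ⟨b, hb⟩ := fun hh => h2 (by rw [hh])
        rw [if_neg h2, if_neg hcb]
  rw [Finset.sum_congr rfl (fun c _ => h c), Finset.sum_add_distrib,
    Finset.sum_ite_eq', Finset.sum_ite_eq']
  simp

lemma fin_sum_one {m : ℕ} (a : ℕ) (ha : a < m) (f : Fin m → R) :
    (∑ c : Fin m, (if (c : ℕ) = a then f c else 0)) = f ⟨a, ha⟩ := by
  have h : ∀ c : Fin m, (if (c : ℕ) = a then f c else 0)
      = (if c = ⟨a, ha⟩ then f c else 0) := by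
    intro c
    rcases eq_or_ne (c : ℕ) a with h1 | h1
    · rw [if_pos h1, if_pos (Fin.ext h1)]
    · have hca : c ≠ ⟨a, ha⟩ := fun hh => h1 (by rw [hh])
      rw [if_neg h1, if_neg hca]
  rw [Finset.sum_congr rfl (fun c _ => h c), Finset.sum_ite_eq']
  simp

end Sums

variable {F : Type} [Field F]

lemma LhatB_inl (u n : ℕ) (p : Fin u × Fin n) (r : Fin n) :
    LhatB F u n p (Sum.inl r) = 0 := rfl

lemma LhatB_inr (u n : ℕ) (p : Fin u × Fin n) (c : Fin (u+1) × Fin n) :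
    LhatB F u n p (Sum.inr c) =
      (if (c.1 : ℕ) = (p.1 : ℕ) then -1 else if (c.1 : ℕ) = (p.1 : ℕ) + 1 then X else 0) *
        (if p.2 = c.2 then 1 else 0) := by
  show (Lpen F u ⊗ₖ (1 : Matrix (Fin n) (Fin n) (Polynomial F))) p c = _
  obtain ⟨c1, c2⟩ := c
  obtain ⟨p1, p2⟩ := p
  rw [show ((p1, p2) : Fin u × Fin n) = (p1, p2) from rfl]
  rw [Matrix.kronecker_apply]
  simp [Lpen, Matrix.one_apply]

/-- first block column of `W` in the non-reversed case : `-N̂ᵀ` -/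
noncomputable def Nm1 (F : Type) [Field F] (u n : ℕ) :
    Matrix (Fin n ⊕ Fin (u+1) × Fin n) (Fin u × Fin n) (Polynomial F) := -(NhatB F u n)ᵀ

lemma Nm1_inl (u n : ℕ) (r : Fin n) (q : Fin u × Fin n) :
    Nm1 F u n (Sum.inl r) q = 0 := by
  simp [Nm1, NhatB]

lemma Nm1_inr (u n : ℕ) (c : Fin (u+1) × Fin n) (q : Fin u × Fin n) :
    Nm1 F u n (Sum.inr c) q =
      -(if (c.1 : ℕ) ≤ (q.1 : ℕ) ∧ q.2 = c.2 then
        (X : Polynomial F) ^ ((q.1 : ℕ) - (c.1 : ℕ)) else 0) := by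
  simp [Nm1, NhatB]

lemma LhatB_mul_apply {γ : Type*} [Fintype γ] (u n : ℕ)
    (A : Matrix (Fin n ⊕ Fin (u+1) × Fin n) γ (Polynomial F)) (j : Fin u) (i : Fin n) (q : γ) :
    (LhatB F u n * A) (j, i) q =
      -(A (.inr (⟨(j : ℕ), by omega⟩, i)) q) + X * A (.inr (⟨(j : ℕ)+1, by omega⟩, i)) q := by
  rw [Matrix.mul_apply, Fintype.sum_sum_type]
  rw [Finset.sum_congr rfl (fun r _ => by rw [LhatB_inl, zero_mul]), Finset.sum_const_zero,
    zero_add, Fintype.sum_prod_type]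
  have h1 : ∀ (cc : Fin (u+1)) (ii : Fin n),
      LhatB F u n (j, i) (.inr (cc, ii)) * A (.inr (cc, ii)) q =
      if i = ii then
        (if (cc : ℕ) = (j : ℕ) then -(A (.inr (cc, ii)) q)
          else if (cc : ℕ) = (j : ℕ) + 1 then X * A (.inr (cc, ii)) q else 0)
      else 0 := by
    intro cc ii
    rw [LhatB_inr]
    by_cases hii : i = ii
    · simp only [if_pos hii, mul_one]
      split_ifs <;> ring
    · simp [hii]
  have hstep : (∑ cc : Fin (u+1), ∑ ii : Fin n,
      LhatB F u n (j, i) (.inr (cc, ii)) * A (.inr (cc, ii)) q) =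
      ∑ cc : Fin (u+1),
        (if (cc : ℕ) = (j : ℕ) then -(A (.inr (cc, i)) q)
          else if (cc : ℕ) = (j : ℕ) + 1 then X * A (.inr (cc, i)) q else 0) := by
    refine Finset.sum_congr rfl fun cc _ => ?_
    rw [Finset.sum_congr rfl (fun ii _ => h1 cc ii), Finset.sum_ite_eq]
    simp
  rw [hstep, fin_sum_two (j : ℕ) ((j : ℕ) + 1) (by omega) (by omega) (by omega)]

lemma C1 (u n : ℕ) : LhatB F u n * Nm1 F u n = 1 := by
  refine Matrix.ext fun q r => ?_
  obtain ⟨j, i⟩ := q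
  obtain ⟨p, ip⟩ := r
  rw [LhatB_mul_apply, Nm1_inr, Nm1_inr]
  simp only [Matrix.one_apply, Prod.ext_iff, Fin.ext_iff, Fin.val_mk]
  split_ifs <;>
    first
      | (exfalso; omega)
      | (simp [show ((p : ℕ) - (j : ℕ)) = 0 by omega])
      | (rw [show ((p : ℕ) - (j : ℕ)) = ((p : ℕ) - ((j : ℕ) + 1)) + 1 by omega, pow_succ]
         ring)
      | ring

lemma LamHatB_inl (u n : ℕ) (r : Fin n) (c : Fin 2 × Fin n) :
    LamHatB F u n (Sum.inl r) c = if c.1 = 0 ∧ c.2 = r then 1 else 0 := rfl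

lemma LamHatB_inr (u n : ℕ) (p : Fin (u+1) × Fin n) (c : Fin 2 × Fin n) :
    LamHatB F u n (Sum.inr p) c =
      if c.1 = 1 ∧ c.2 = p.2 then (X : Polynomial F) ^ (u - (p.1 : ℕ)) else 0 := rfl

lemma C2 (u n : ℕ) : LhatB F u n * LamHatB F u n = 0 := by
  refine Matrix.ext fun q r => ?_
  obtain ⟨j, i⟩ := q
  rw [LhatB_mul_apply, LamHatB_inr, LamHatB_inr]
  simp only [Matrix.zero_apply]
  split_ifs <;>
    first
      | (rw [show (u - (j : ℕ)) = (u - ((j : ℕ) + 1)) + 1 by omega, pow_succ]; ring)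
      | ring

/-- a row-selection matrix -/
noncomputable def pickMat (F : Type) [Field F] {α β : Type*} [DecidableEq α] (f : β → α) :
    Matrix β α (Polynomial F) :=
  Matrix.of fun q r => if r = f q then 1 else 0

lemma pickMat_mul {α β γ : Type*} [Fintype α] [DecidableEq α]
    (f : β → α) (A : Matrix α γ (Polynomial F)) (q : β) (c : γ) :
    (pickMat F f * A) q c = A (f q) c := by
  rw [Matrix.mul_apply]
  simp [pickMat, ite_mul, Finset.sum_ite_eq']

/-- the two extra rows of `W⁻¹` in the non-reversed case -/
noncomputable def Rsel1 (F : Type) [Field F] (u n : ℕ) :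
    Matrix (Fin 2 × Fin n) (Fin n ⊕ Fin (u+1) × Fin n) (Polynomial F) :=
  pickMat F (fun q => if q.1 = 0 then Sum.inl q.2 else Sum.inr (Fin.last u, q.2))

lemma C3 (u n : ℕ) : Rsel1 F u n * Nm1 F u n = 0 := by
  refine Matrix.ext fun q r => ?_
  obtain ⟨k, iq⟩ := q
  rw [Rsel1, pickMat_mul]
  by_cases hk : k = 0
  · subst hk
    rw [if_pos rfl]
    simp [Nm1_inl]
  · rw [Fin.eq_one_of_ne_zero k hk, if_neg (by exact one_ne_zero), Nm1_inr,
      if_neg (by rintro ⟨h1, -⟩; simp [Fin.val_last] at h1; omega)]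
    simp

lemma C4 (u n : ℕ) : Rsel1 F u n * LamHatB F u n = 1 := by
  refine Matrix.ext fun q r => ?_
  obtain ⟨k, iq⟩ := q
  obtain ⟨k', iq'⟩ := r
  by_cases hk : k = 0
  · subst hk
    rw [Rsel1, pickMat_mul, if_pos rfl, LamHatB_inl]
    simp only [Matrix.one_apply, Prod.ext_iff]
    simp [@eq_comm _ k' 0, @eq_comm _ iq' iq]
  · rw [Fin.eq_one_of_ne_zero k hk, Rsel1, pickMat_mul, if_neg (by exact one_ne_zero),
      LamHatB_inr]
    simp only [Matrix.one_apply, Prod.ext_iff, Fin.val_last, Nat.sub_self, pow_zero]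
    simp [@eq_comm _ k' 1, @eq_comm _ iq' iq]

lemma W1inv (u n : ℕ) :
    Matrix.fromRows (LhatB F u n) (Rsel1 F u n) *
      Matrix.fromCols (Nm1 F u n) (LamHatB F u n) = 1 := by
  rw [Matrix.fromRows_mul, Matrix.mul_fromCols, Matrix.mul_fromCols,
    C1, C2, C3, C4, Matrix.fromRows_fromCols_eq_fromBlocks, Matrix.fromBlocks_one]

lemma reflect_one_neg_one : Polynomial.reflect 1 (-1 : Polynomial F) = -X := by
  rw [Polynomial.reflect_neg, ← Polynomial.C_1, Polynomial.reflect_C]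
  simp

lemma reflect_one_X : Polynomial.reflect 1 (X : Polynomial F) = 1 := by
  rw [← pow_one (X : Polynomial F), Polynomial.reflect_monomial,
    Polynomial.revAt_le (le_refl 1)]
  simp

/-- `rev₁ (L̂ ⊗ I)` -/
noncomputable def Ktil (F : Type) [Field F] (u n : ℕ) :
    Matrix (Fin u × Fin n) (Fin n ⊕ Fin (u+1) × Fin n) (Polynomial F) :=
  Matrix.of fun p q => match q with
    | .inl _ => 0
    | .inr c => (if (c.1 : ℕ) = (p.1 : ℕ) then -X
        else if (c.1 : ℕ) = (p.1 : ℕ) + 1 then 1 else 0) *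
          (if p.2 = c.2 then 1 else 0)

lemma Ktil_inl (u n : ℕ) (p : Fin u × Fin n) (r : Fin n) :
    Ktil F u n p (Sum.inl r) = 0 := rfl

lemma Ktil_inr (u n : ℕ) (p : Fin u × Fin n) (c : Fin (u+1) × Fin n) :
    Ktil F u n p (Sum.inr c) =
      (if (c.1 : ℕ) = (p.1 : ℕ) then -X
        else if (c.1 : ℕ) = (p.1 : ℕ) + 1 then 1 else 0) *
          (if p.2 = c.2 then 1 else 0) := rfl

lemma rev_LhatB (u n : ℕ) : revMat 1 (LhatB F u n) = Ktil F u n := by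
  refine Matrix.ext fun p q => ?_
  rcases q with r | c
  · show Polynomial.reflect 1 (LhatB F u n p (.inl r)) = Ktil F u n p (.inl r)
    rw [LhatB_inl, Ktil_inl, Polynomial.reflect_zero]
  · show Polynomial.reflect 1 (LhatB F u n p (.inr c)) = Ktil F u n p (.inr c)
    rw [LhatB_inr, Ktil_inr]
    split_ifs <;> simp [reflect_one_neg_one, reflect_one_X]

lemma Ktil_mul_apply {γ : Type*} [Fintype γ] (u n : ℕ)
    (A : Matrix (Fin n ⊕ Fin (u+1) × Fin n) γ (Polynomial F)) (j : Fin u) (i : Fin n) (q : γ) :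
    (Ktil F u n * A) (j, i) q =
      -(X * A (.inr (⟨(j : ℕ), by omega⟩, i)) q) + A (.inr (⟨(j : ℕ)+1, by omega⟩, i)) q := by
  rw [Matrix.mul_apply, Fintype.sum_sum_type]
  rw [Finset.sum_congr rfl (fun r _ => by rw [Ktil_inl, zero_mul]), Finset.sum_const_zero,
    zero_add, Fintype.sum_prod_type]
  have h1 : ∀ (cc : Fin (u+1)) (ii : Fin n),
      Ktil F u n (j, i) (.inr (cc, ii)) * A (.inr (cc, ii)) q =
      if i = ii then
        (if (cc : ℕ) = (j : ℕ) then -(X * A (.inr (cc, ii)) q)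
          else if (cc : ℕ) = (j : ℕ) + 1 then A (.inr (cc, ii)) q else 0)
      else 0 := by
    intro cc ii
    rw [Ktil_inr]
    by_cases hii : i = ii
    · simp only [if_pos hii, mul_one]
      split_ifs <;> ring
    · simp [hii]
  have hstep : (∑ cc : Fin (u+1), ∑ ii : Fin n,
      Ktil F u n (j, i) (.inr (cc, ii)) * A (.inr (cc, ii)) q) =
      ∑ cc : Fin (u+1),
        (if (cc : ℕ) = (j : ℕ) then -(X * A (.inr (cc, i)) q)
          else if (cc : ℕ) = (j : ℕ) + 1 then A (.inr (cc, i)) q else 0) := by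
    refine Finset.sum_congr rfl fun cc _ => ?_
    rw [Finset.sum_congr rfl (fun ii _ => h1 cc ii), Finset.sum_ite_eq]
    simp
  rw [hstep, fin_sum_two (j : ℕ) ((j : ℕ) + 1) (by omega) (by omega) (by omega)]

/-- first block column of `W` in the reversed case -/
noncomputable def Nm2 (F : Type) [Field F] (u n : ℕ) :
    Matrix (Fin n ⊕ Fin (u+1) × Fin n) (Fin u × Fin n) (Polynomial F) :=
  Matrix.of fun q pp => match q with
    | .inl _ => 0
    | .inr c => if (pp.1 : ℕ) + 1 ≤ (c.1 : ℕ) ∧ pp.2 = c.2 then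
        (X : Polynomial F) ^ ((c.1 : ℕ) - (pp.1 : ℕ) - 1) else 0

lemma Nm2_inl (u n : ℕ) (r : Fin n) (q : Fin u × Fin n) : Nm2 F u n (Sum.inl r) q = 0 := rfl

lemma Nm2_inr (u n : ℕ) (c : Fin (u+1) × Fin n) (q : Fin u × Fin n) :
    Nm2 F u n (Sum.inr c) q = if (q.1 : ℕ) + 1 ≤ (c.1 : ℕ) ∧ q.2 = c.2 then
      (X : Polynomial F) ^ ((c.1 : ℕ) - (q.1 : ℕ) - 1) else 0 := rfl

lemma LamTildeB_inl (u n : ℕ) (r : Fin n) (c : Fin 2 × Fin n) :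
    LamTildeB F u n (Sum.inl r) c = if c.1 = 0 ∧ c.2 = r then 1 else 0 := rfl

lemma LamTildeB_inr (u n : ℕ) (p : Fin (u+1) × Fin n) (c : Fin 2 × Fin n) :
    LamTildeB F u n (Sum.inr p) c =
      if c.1 = 1 ∧ c.2 = p.2 then (X : Polynomial F) ^ (p.1 : ℕ) else 0 := rfl

lemma C1' (u n : ℕ) : Ktil F u n * Nm2 F u n = 1 := by
  refine Matrix.ext fun q r => ?_
  obtain ⟨j, i⟩ := q
  obtain ⟨p, ip⟩ := r
  rw [Ktil_mul_apply, Nm2_inr, Nm2_inr]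
  simp only [Matrix.one_apply, Prod.ext_iff, Fin.ext_iff, Fin.val_mk]
  split_ifs <;>
    first
      | (exfalso; omega)
      | (simp [show ((j : ℕ) + 1 - (p : ℕ) - 1) = 0 by omega])
      | (rw [show ((j : ℕ) + 1 - (p : ℕ) - 1) = ((j : ℕ) - (p : ℕ) - 1) + 1 by omega, pow_succ]
         ring)
      | ring

lemma C2' (u n : ℕ) : Ktil F u n * LamTildeB F u n = 0 := by
  refine Matrix.ext fun q r => ?_
  obtain ⟨j, i⟩ := q
  rw [Ktil_mul_apply, LamTildeB_inr, LamTildeB_inr]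
  simp only [Matrix.zero_apply]
  split_ifs <;>
    first
      | (rw [show ((j : ℕ) + 1) = (j : ℕ) + 1 from rfl, pow_succ]; ring)
      | ring

/-- the two extra rows of `W⁻¹` in the reversed case -/
noncomputable def Rsel2 (F : Type) [Field F] (u n : ℕ) :
    Matrix (Fin 2 × Fin n) (Fin n ⊕ Fin (u+1) × Fin n) (Polynomial F) :=
  pickMat F (fun q => if q.1 = 0 then Sum.inl q.2 else Sum.inr ((0 : Fin (u+1)), q.2))

lemma C3' (u n : ℕ) : Rsel2 F u n * Nm2 F u n = 0 := by
  refine Matrix.ext fun q r => ?_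
  obtain ⟨k, iq⟩ := q
  rw [Rsel2, pickMat_mul]
  by_cases hk : k = 0
  · subst hk
    rw [if_pos rfl]
    simp [Nm2_inl]
  · rw [Fin.eq_one_of_ne_zero k hk, if_neg (by exact one_ne_zero), Nm2_inr,
      if_neg (by rintro ⟨h1, -⟩; simp at h1)]
    simp

lemma C4' (u n : ℕ) : Rsel2 F u n * LamTildeB F u n = 1 := by
  refine Matrix.ext fun q r => ?_
  obtain ⟨k, iq⟩ := q
  obtain ⟨k', iq'⟩ := r
  by_cases hk : k = 0
  · subst hk
    rw [Rsel2, pickMat_mul, if_pos rfl, LamTildeB_inl]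
    simp only [Matrix.one_apply, Prod.ext_iff]
    simp [@eq_comm _ k' 0, @eq_comm _ iq' iq]
  · rw [Fin.eq_one_of_ne_zero k hk, Rsel2, pickMat_mul, if_neg (by exact one_ne_zero),
      LamTildeB_inr]
    simp only [Matrix.one_apply, Prod.ext_iff, Fin.val_zero, pow_zero]
    simp [@eq_comm _ k' 1, @eq_comm _ iq' iq]

lemma W2inv (u n : ℕ) :
    Matrix.fromRows (Ktil F u n) (Rsel2 F u n) *
      Matrix.fromCols (Nm2 F u n) (LamTildeB F u n) = 1 := by
  rw [Matrix.fromRows_mul, Matrix.mul_fromCols, Matrix.mul_fromCols,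
    C1', C2', C3', C4', Matrix.fromRows_fromCols_eq_fromBlocks, Matrix.fromBlocks_one]

section Rev
variable {F : Type} [Field F]

lemma reflect_sum {γ : Type*} (N : ℕ) (s : Finset γ) (f : γ → Polynomial F) :
    Polynomial.reflect N (∑ i ∈ s, f i) = ∑ i ∈ s, Polynomial.reflect N (f i) :=
  map_sum (AddMonoidHom.mk' (fun p => Polynomial.reflect N p)
    (fun p q => Polynomial.reflect_add p q N)) f s

lemma revMat_mul {a b : ℕ} {α β γ : Type*} [Fintype β]
    (M : Matrix α β (Polynomial F)) (N : Matrix β γ (Polynomial F))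
    (hM : ∀ i j, (M i j).natDegree ≤ a) (hN : ∀ i j, (N i j).natDegree ≤ b) :
    revMat (a + b) (M * N) = revMat a M * revMat b N := by
  refine Matrix.ext fun i j => ?_
  show Polynomial.reflect (a+b) ((M * N) i j) = (revMat a M * revMat b N) i j
  rw [Matrix.mul_apply, Matrix.mul_apply, reflect_sum]
  refine Finset.sum_congr rfl fun k _ => ?_
  show Polynomial.reflect (a+b) (M i k * N k j) = (M i k).reflect a * (N k j).reflect b
  exact Polynomial.reflect_mul _ _ (hM i k) (hN k j)

lemma revMat_transpose {g : ℕ} {α β : Type*} (M : Matrix α β (Polynomial F)) :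
    revMat g (Mᵀ) = (revMat g M)ᵀ := rfl

lemma degLe_pencil {α β : Type*} (A B : Matrix α β F) :
    ∀ i j, ((pencil A B) i j).natDegree ≤ 1 := by
  intro i j
  have h : pencil A B i j = C (A i j) + X * C (B i j) := by
    simp [pencil, matC, Polynomial.smul_eq_C_mul]
    try ring
  rw [h]
  refine le_trans (Polynomial.natDegree_add_le _ _) (max_le (by simp) ?_)
  refine le_trans (Polynomial.natDegree_mul_le) ?_
  simp [Polynomial.natDegree_X_le]

lemma degLe_LamHatB (u n : ℕ) : ∀ q c, ((LamHatB F u n) q c).natDegree ≤ u := by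
  intro q c
  rcases q with r | p
  · rw [LamHatB_inl]
    split_ifs <;> simp
  · rw [LamHatB_inr]
    split_ifs <;> simp [Polynomial.natDegree_X_pow] <;> omega

lemma degLe_mul {a b : ℕ} {α β γ : Type*} [Fintype β]
    (M : Matrix α β (Polynomial F)) (N : Matrix β γ (Polynomial F))
    (hM : ∀ i j, (M i j).natDegree ≤ a) (hN : ∀ i j, (N i j).natDegree ≤ b) :
    ∀ i j, ((M * N) i j).natDegree ≤ a + b := by
  intro i j
  rw [Matrix.mul_apply]
  refine Polynomial.natDegree_sum_le_of_forall_le _ _ fun k _ => ?_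
  exact le_trans Polynomial.natDegree_mul_le (add_le_add (hM i k) (hN k j))

lemma rev_pencil {α β : Type*} (A B : Matrix α β F) :
    revMat 1 (pencil A B) = pencil B A := by
  refine Matrix.ext fun i j => ?_
  show Polynomial.reflect 1 (pencil A B i j) = pencil B A i j
  have h : ∀ (A B : Matrix α β F), pencil A B i j = C (A i j) + X * C (B i j) := by
    intro A B
    simp [pencil, matC, Polynomial.smul_eq_C_mul]
    try ring
  rw [h, h, Polynomial.reflect_add, Polynomial.reflect_C, mul_comm (X : Polynomial F),
    Polynomial.reflect_C_mul, reflect_one_X]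
  ring

/-- the diagonal matrix `diag(λ^u I, I)` -/
noncomputable def Dm (F : Type) [Field F] (u n : ℕ) :
    Matrix (Fin 2 × Fin n) (Fin 2 × Fin n) (Polynomial F) :=
  Matrix.diagonal (fun p => if p.1 = 0 then (X : Polynomial F)^u else 1)

lemma rev_LamHatB (u n : ℕ) : revMat u (LamHatB F u n) = LamTildeB F u n * Dm F u n := by
  refine Matrix.ext fun q c => ?_
  show Polynomial.reflect u (LamHatB F u n q c) = _
  rw [Dm, Matrix.mul_diagonal]
  rcases q with r | p
  · rw [LamHatB_inl, LamTildeB_inl]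
    by_cases h1 : c.1 = 0 ∧ c.2 = r
    · rw [if_pos h1, if_pos h1.1, ← Polynomial.C_1, Polynomial.reflect_C]
      try simp
    · rw [if_neg h1, Polynomial.reflect_zero, zero_mul]
  · rw [LamHatB_inr, LamTildeB_inr]
    by_cases h1 : c.1 = 1 ∧ c.2 = p.2
    · rw [if_pos h1, if_pos h1, if_neg (by rw [h1.1]; exact one_ne_zero),
        Polynomial.reflect_monomial, Polynomial.revAt_le (by omega), mul_one]
      congr 1
      omega
    · rw [if_neg h1, if_neg h1, Polynomial.reflect_zero, zero_mul]

end Rev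

section ZBlocks
variable {F : Type} [Field F]

lemma matC_apply {α β : Type*} (M : Matrix α β F) (i : α) (j : β) :
    matC M i j = C (M i j) := rfl

lemma matC_mul {α β γ : Type*} [Fintype β] [DecidableEq β] (M : Matrix α β F)
    (N : Matrix β γ F) : matC M * matC N = matC (M * N) := by
  simp [matC, Matrix.map_mul]

lemma twoBlock_apply {α : Type*} {n : ℕ} (W11 W12 W21 W22 : Matrix (Fin n) (Fin n) α)
    (p q : Fin 2 × Fin n) :
    twoBlock W11 W12 W21 W22 p q =
      if p.1 = 0 then (if q.1 = 0 then W11 p.2 q.2 else W12 p.2 q.2)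
      else (if q.1 = 0 then W21 p.2 q.2 else W22 p.2 q.2) := rfl

def eRho (n : ℕ) : (Fin n ⊕ Fin n) ≃ (Fin 2 × Fin n) where
  toFun x := match x with | .inl i => (0, i) | .inr i => (1, i)
  invFun p := if p.1 = 0 then .inl p.2 else .inr p.2
  left_inv := by
    rintro (i | i)
    · simp
    · simp [one_ne_zero]
  right_inv := by
    rintro ⟨k, i⟩
    by_cases hk : k = 0
    · subst hk; simp
    · rw [Fin.eq_one_of_ne_zero k hk]; simp [one_ne_zero]

lemma twoBlock_submatrix {α : Type*} {n : ℕ} (W11 W12 W21 W22 : Matrix (Fin n) (Fin n) α) :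
    (twoBlock W11 W12 W21 W22).submatrix (eRho n) (eRho n) =
      Matrix.fromBlocks W11 W12 W21 W22 := by
  refine Matrix.ext fun p q => ?_
  rcases p with i | i <;> rcases q with j | j <;>
    simp [twoBlock_apply, eRho, one_ne_zero]

lemma MEq_twoBlock {n : ℕ} (W11 W12 W21 W22 : Matrix (Fin n) (Fin n) (Polynomial F)) :
    MEq (twoBlock W11 W12 W21 W22) (Matrix.fromBlocks W11 W12 W21 W22) := by
  have h := MEq.submatrix (eRho n) (twoBlock W11 W12 W21 W22)
  rwa [twoBlock_submatrix] at h

lemma Zred1 (u n : ℕ) (Pm : Matrix (Fin n) (Fin n) F) (hP : IsUnit Pm.det)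
    (Qm : Matrix (Fin n) (Fin n) (Polynomial F)) :
    MEq (Matrix.fromBlocks (-(matC Pm)) ((X : Polynomial F)^(u+1) • matC Pm)
        ((X : Polynomial F)^(u+1) • matC Pm) Qm)
      (Matrix.fromBlocks (1 : Matrix (Fin n) (Fin n) (Polynomial F)) 0 0
        ((X : Polynomial F)^(2*(u+1)) • matC Pm + Qm)) := by
  have hPinv1 : matC (Pm⁻¹) * matC Pm = 1 := by
    rw [matC_mul, Matrix.nonsing_inv_mul _ hP, matC, Matrix.map_one _ (map_zero C) (map_one C)]
  have step1 : MEq (Matrix.fromBlocks (-(matC Pm)) ((X : Polynomial F)^(u+1) • matC Pm)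
        ((X : Polynomial F)^(u+1) • matC Pm) Qm)
      (Matrix.fromBlocks (-(matC Pm)) ((X : Polynomial F)^(u+1) • matC Pm) 0
        ((X : Polynomial F)^(2*(u+1)) • matC Pm + Qm)) := by
    refine MEq.of_unimodular
      (U := Matrix.fromBlocks 1 0 ((X : Polynomial F)^(u+1) • 1) 1) (V := 1)
      (by rw [Matrix.det_fromBlocks_zero₁₂]; simp) (by simp) ?_
    rw [Matrix.mul_one, Matrix.fromBlocks_multiply]
    simp only [Matrix.smul_mul, Matrix.one_mul, Matrix.mul_one, Matrix.zero_mul,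
      Matrix.mul_zero, add_zero, zero_add, smul_neg, neg_add_cancel, smul_smul, ← pow_add]
    rw [show (u+1) + (u+1) = 2*(u+1) by ring]
  have step2 : MEq (Matrix.fromBlocks (-(matC Pm)) ((X : Polynomial F)^(u+1) • matC Pm) 0
        ((X : Polynomial F)^(2*(u+1)) • matC Pm + Qm))
      (Matrix.fromBlocks (-(matC Pm)) 0 0
        ((X : Polynomial F)^(2*(u+1)) • matC Pm + Qm)) := by
    refine MEq.of_unimodular (U := 1)
      (V := Matrix.fromBlocks 1 ((X : Polynomial F)^(u+1) • 1) 0 1)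
      (by simp) (by rw [Matrix.det_fromBlocks_zero₂₁]; simp) ?_
    rw [Matrix.one_mul, Matrix.fromBlocks_multiply]
    simp only [Matrix.mul_smul, Matrix.one_mul, Matrix.mul_one, Matrix.zero_mul,
      Matrix.mul_zero, add_zero, zero_add, smul_zero, smul_neg, neg_add_cancel]
  have step3 : MEq (Matrix.fromBlocks (-(matC Pm)) 0 0
        ((X : Polynomial F)^(2*(u+1)) • matC Pm + Qm))
      (Matrix.fromBlocks (1 : Matrix (Fin n) (Fin n) (Polynomial F)) 0 0
        ((X : Polynomial F)^(2*(u+1)) • matC Pm + Qm)) := by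
    refine MEq.of_unimodular (U := Matrix.fromBlocks (-(matC (Pm⁻¹))) 0 0 1) (V := 1)
      ?_ (by simp) ?_
    · rw [Matrix.det_fromBlocks_zero₁₂, Matrix.det_one, mul_one, Matrix.det_neg]
      refine IsUnit.mul (IsUnit.pow _ (isUnit_one.neg)) ?_
      rw [show (matC (Pm⁻¹)).det = C ((Pm⁻¹).det) from (RingHom.map_det C Pm⁻¹).symm]
      exact Polynomial.isUnit_C.mpr (Matrix.isUnit_nonsing_inv_det Pm hP)
    · rw [Matrix.mul_one, Matrix.fromBlocks_multiply]
      simp only [Matrix.neg_mul, Matrix.mul_neg, neg_neg, Matrix.one_mul, Matrix.mul_one,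
        Matrix.zero_mul, Matrix.mul_zero, add_zero, zero_add, neg_zero, hPinv1]
  exact (step1.trans step2).trans step3

lemma Zred2 (u n : ℕ) (Pm : Matrix (Fin n) (Fin n) F) (hP : IsUnit Pm.det)
    (Qt : Matrix (Fin n) (Fin n) (Polynomial F)) :
    MEq (Matrix.fromBlocks (-((X : Polynomial F) • matC Pm)) (matC Pm) (matC Pm) Qt)
      (Matrix.fromBlocks (1 : Matrix (Fin n) (Fin n) (Polynomial F)) 0 0
        (matC Pm + (X : Polynomial F) • Qt)) := by
  have hPinv1 : matC (Pm⁻¹) * matC Pm = 1 := by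
    rw [matC_mul, Matrix.nonsing_inv_mul _ hP, matC, Matrix.map_one _ (map_zero C) (map_one C)]
  have step1 : MEq (Matrix.fromBlocks (-((X : Polynomial F) • matC Pm)) (matC Pm)
        (matC Pm) Qt)
      (Matrix.fromBlocks 0 (matC Pm) (matC Pm + (X : Polynomial F) • Qt) Qt) := by
    refine MEq.of_unimodular (U := 1)
      (V := Matrix.fromBlocks 1 0 ((X : Polynomial F) • 1) 1)
      (by simp) (by rw [Matrix.det_fromBlocks_zero₁₂]; simp) ?_
    rw [Matrix.one_mul, Matrix.fromBlocks_multiply]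
    simp only [Matrix.mul_smul, Matrix.one_mul, Matrix.mul_one, Matrix.zero_mul,
      Matrix.mul_zero, add_zero, zero_add, smul_zero, smul_neg, neg_add_cancel]
  have step2 : MEq (Matrix.fromBlocks 0 (matC Pm) (matC Pm + (X : Polynomial F) • Qt) Qt)
      (Matrix.fromBlocks 0 (matC Pm) (matC Pm + (X : Polynomial F) • Qt) 0) := by
    refine MEq.of_unimodular
      (U := Matrix.fromBlocks 1 0 (-(Qt * matC (Pm⁻¹))) 1) (V := 1)
      (by rw [Matrix.det_fromBlocks_zero₁₂]; simp) (by simp) ?_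
    rw [Matrix.mul_one, Matrix.fromBlocks_multiply]
    simp only [Matrix.neg_mul, Matrix.one_mul, Matrix.mul_one, Matrix.zero_mul,
      Matrix.mul_zero, add_zero, zero_add, neg_zero]
    rw [Matrix.mul_assoc, hPinv1, Matrix.mul_one, neg_add_cancel]
  have step3 : MEq (Matrix.fromBlocks 0 (matC Pm) (matC Pm + (X : Polynomial F) • Qt) 0)
      (Matrix.fromBlocks (matC Pm) 0 0 (matC Pm + (X : Polynomial F) • Qt)) := by
    refine MEq.of_unimodular (U := 1)
      (V := Matrix.fromBlocks 0 1 1 0)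
      (by simp) (Matrix.isUnit_det_of_right_inverse (B := Matrix.fromBlocks 0 1 1 0) ?_) ?_
    · rw [Matrix.fromBlocks_multiply]
      simp only [Matrix.mul_zero, Matrix.zero_mul, Matrix.mul_one, Matrix.one_mul,
        add_zero, zero_add]
      exact Matrix.fromBlocks_one
    · rw [Matrix.one_mul, Matrix.fromBlocks_multiply]
      simp only [Matrix.mul_zero, Matrix.zero_mul, Matrix.mul_one, Matrix.one_mul,
        add_zero, zero_add]
  have step4 : MEq (Matrix.fromBlocks (matC Pm) 0 0 (matC Pm + (X : Polynomial F) • Qt))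
      (Matrix.fromBlocks (1 : Matrix (Fin n) (Fin n) (Polynomial F)) 0 0
        (matC Pm + (X : Polynomial F) • Qt)) := by
    refine MEq.of_unimodular (U := Matrix.fromBlocks (matC (Pm⁻¹)) 0 0 1) (V := 1)
      ?_ (by simp) ?_
    · rw [Matrix.det_fromBlocks_zero₁₂, Matrix.det_one, mul_one]
      rw [show (matC (Pm⁻¹)).det = C ((Pm⁻¹).det) from (RingHom.map_det C Pm⁻¹).symm]
      exact Polynomial.isUnit_C.mpr (Matrix.isUnit_nonsing_inv_det Pm hP)
    · rw [Matrix.mul_one, Matrix.fromBlocks_multiply]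
      simp only [Matrix.one_mul, Matrix.mul_one, Matrix.zero_mul, Matrix.mul_zero,
        add_zero, zero_add, hPinv1]
  exact ((step1.trans step2).trans step3).trans step4

end ZBlocks

section Final
variable {F : Type} [Field F]

lemma revMat_smul {g : ℕ} {α β : Type*} (σ : F) (M : Matrix α β (Polynomial F)) :
    revMat g (σ • M) = σ • revMat g M := by
  refine Matrix.ext fun i j => ?_
  show Polynomial.reflect g (σ • M i j) = σ • (M i j).reflect g
  rw [Polynomial.smul_eq_C_mul, Polynomial.reflect_C_mul, ← Polynomial.smul_eq_C_mul]

lemma revMat_zero {g : ℕ} {α β : Type*} :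
    revMat g (0 : Matrix α β (Polynomial F)) = 0 := by
  refine Matrix.ext fun i j => ?_
  show Polynomial.reflect g (0 : Polynomial F) = 0
  exact Polynomial.reflect_zero

lemma rev_modBK (u n : ℕ) (σ : F)
    (M : Matrix (Fin n ⊕ Fin (u+1) × Fin n) (Fin n ⊕ Fin (u+1) × Fin n) (Polynomial F)) :
    revMat 1 (modBK F u n σ M) =
      Matrix.fromBlocks (revMat 1 M) (Ktil F u n)ᵀ (σ • Ktil F u n) 0 := by
  show (Matrix.fromBlocks M (LhatB F u n)ᵀ (σ • LhatB F u n) 0).map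
    (fun q => q.reflect 1) = _
  rw [Matrix.fromBlocks_map]
  rw [show (LhatB F u n)ᵀ.map (fun q => q.reflect 1) = (Ktil F u n)ᵀ from
    (congrArg Matrix.transpose (rev_LhatB u n) : _)]
  rw [show (σ • LhatB F u n).map (fun q => q.reflect 1) = σ • Ktil F u n by
    rw [show (σ • LhatB F u n).map (fun q => q.reflect 1) = revMat 1 (σ • LhatB F u n) from rfl,
      revMat_smul, rev_LhatB]]
  rw [show (0 : Matrix (Fin u × Fin n) (Fin u × Fin n) (Polynomial F)).map
    (fun q => q.reflect 1) = 0 from revMat_zero]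
  rfl

lemma revP_eq (u n : ℕ) (Pm : Matrix (Fin n) (Fin n) F)
    (Qm : Matrix (Fin n) (Fin n) (Polynomial F))
    (hQ : ∀ i j, (Qm i j).natDegree ≤ 2*(u+1) - 1) :
    revMat (2*(u+1)) ((X : Polynomial F)^(2*(u+1)) • matC Pm + Qm) =
      matC Pm + (X : Polynomial F) • revMat (2*u+1) Qm := by
  refine Matrix.ext fun i j => ?_
  show Polynomial.reflect (2*(u+1))
      ((X : Polynomial F)^(2*(u+1)) * C (Pm i j) + Qm i j) =
    C (Pm i j) + X * (Qm i j).reflect (2*u+1)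
  rw [Polynomial.reflect_add, mul_comm ((X : Polynomial F)^(2*(u+1))) (C (Pm i j)),
    Polynomial.reflect_C_mul_X_pow,
    Polynomial.revAt_le (le_refl _), Nat.sub_self, pow_zero, mul_one]
  congr 1
  have hq : (Qm i j).natDegree ≤ 2*u+1 := le_trans (hQ i j) (by omega)
  have h1 : Polynomial.reflect (2*u+1+1) (Qm i j * 1) =
      (Qm i j).reflect (2*u+1) * (1 : Polynomial F).reflect 1 :=
    Polynomial.reflect_mul _ _ hq (by simp)
  rw [mul_one] at h1
  rw [show 2*(u+1) = 2*u+1+1 by ring, h1, ← Polynomial.C_1, Polynomial.reflect_C,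
    Polynomial.C_1, one_mul, pow_one, mul_comm]

lemma Ztilde (u n : ℕ)
    (A B : Matrix (Fin n ⊕ Fin (u+1) × Fin n) (Fin n ⊕ Fin (u+1) × Fin n) F)
    (Pm : Matrix (Fin n) (Fin n) F) (Qm : Matrix (Fin n) (Fin n) (Polynomial F))
    (hcond : (LamHatB F u n)ᵀ * pencil A B * LamHatB F u n =
      twoBlock (-(matC Pm)) ((X : Polynomial F) ^ (u+1) • matC Pm)
        ((X : Polynomial F) ^ (u+1) • matC Pm) Qm) :
    (LamTildeB F u n)ᵀ * pencil B A * LamTildeB F u n =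
      twoBlock (-((X : Polynomial F) • matC Pm)) (matC Pm) (matC Pm)
        (revMat (2*u+1) Qm) := by
  have hd := congrArg (revMat (u + (1 + u))) hcond
  rw [Matrix.mul_assoc, revMat_mul _ _
      (fun i j => by rw [Matrix.transpose_apply]; exact degLe_LamHatB u n j i)
      (degLe_mul _ _ (degLe_pencil A B) (degLe_LamHatB u n)),
    revMat_mul _ _ (degLe_pencil A B) (degLe_LamHatB u n),
    revMat_transpose, rev_LamHatB, rev_pencil] at hd
  have hDt : (Dm F u n)ᵀ = Dm F u n := by
    rw [Dm]; exact Matrix.diagonal_transpose _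
  have key : Dm F u n * ((LamTildeB F u n)ᵀ * pencil B A * LamTildeB F u n) * Dm F u n =
      revMat (u + (1 + u)) (twoBlock (-(matC Pm)) ((X : Polynomial F) ^ (u+1) • matC Pm)
        ((X : Polynomial F) ^ (u+1) • matC Pm) Qm) := by
    rw [← hd, Matrix.transpose_mul, hDt]
    simp only [Matrix.mul_assoc]
  have hXu : (X : Polynomial F)^u ≠ 0 := pow_ne_zero _ Polynomial.X_ne_zero
  refine Matrix.ext fun p q => ?_
  have hpq := congrFun (congrFun key p) q
  rw [show (Dm F u n * ((LamTildeB F u n)ᵀ * pencil B A * LamTildeB F u n) * Dm F u n) p q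
      = (if p.1 = 0 then (X : Polynomial F)^u else 1) *
        ((LamTildeB F u n)ᵀ * pencil B A * LamTildeB F u n) p q *
        (if q.1 = 0 then (X : Polynomial F)^u else 1) by
    rw [Dm, Matrix.mul_diagonal, Matrix.diagonal_mul]] at hpq
  set G := (LamTildeB F u n)ᵀ * pencil B A * LamTildeB F u n with hG
  obtain ⟨k, i⟩ := p
  obtain ⟨k', j⟩ := q
  by_cases hk : k = 0
  · subst hk
    by_cases hk' : k' = 0
    · subst hk'
      have hpq2 : (X : Polynomial F)^u * G (0, i) (0, j) * (X : Polynomial F)^u =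
          Polynomial.reflect (u + (1 + u)) ((-(matC Pm)) i j) := hpq
      show G (0, i) (0, j) = (-((X : Polynomial F) • matC Pm)) i j
      refine mul_left_cancel₀ hXu (mul_right_cancel₀ hXu ?_)
      rw [hpq2, Matrix.neg_apply, matC_apply, Polynomial.reflect_neg, Polynomial.reflect_C,
        Matrix.neg_apply, Matrix.smul_apply, matC_apply, smul_eq_mul]
      ring
    · rw [Fin.eq_one_of_ne_zero k' hk']
      have hpq2 : (X : Polynomial F)^u * G (0, i) ((1 : Fin 2), j) * 1 =
          Polynomial.reflect (u + (1 + u)) (((X : Polynomial F)^(u+1) • matC Pm) i j) := by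
        rw [Fin.eq_one_of_ne_zero k' hk'] at hpq
        exact hpq
      show G (0, i) ((1 : Fin 2), j) = matC Pm i j
      rw [mul_one] at hpq2
      have hval : Polynomial.reflect (u + (1 + u)) (((X : Polynomial F)^(u+1) • matC Pm) i j) =
          C (Pm i j) * X^u := by
        rw [Matrix.smul_apply, matC_apply, smul_eq_mul,
          mul_comm ((X : Polynomial F)^(u+1)) (C (Pm i j)),
          Polynomial.reflect_C_mul_X_pow, Polynomial.revAt_le (by omega),
          show u + (1 + u) - (u+1) = u by omega]
      rw [hval] at hpq2
      refine mul_left_cancel₀ hXu ?_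
      rw [hpq2, matC_apply]
      ring
  · rw [Fin.eq_one_of_ne_zero k hk]
    by_cases hk' : k' = 0
    · subst hk'
      have hpq2 : 1 * G ((1 : Fin 2), i) (0, j) * (X : Polynomial F)^u =
          Polynomial.reflect (u + (1 + u)) (((X : Polynomial F)^(u+1) • matC Pm) i j) := by
        rw [Fin.eq_one_of_ne_zero k hk] at hpq
        exact hpq
      show G ((1 : Fin 2), i) (0, j) = matC Pm i j
      rw [one_mul] at hpq2
      have hval : Polynomial.reflect (u + (1 + u)) (((X : Polynomial F)^(u+1) • matC Pm) i j) =
          C (Pm i j) * X^u := by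
        rw [Matrix.smul_apply, matC_apply, smul_eq_mul,
          mul_comm ((X : Polynomial F)^(u+1)) (C (Pm i j)),
          Polynomial.reflect_C_mul_X_pow, Polynomial.revAt_le (by omega),
          show u + (1 + u) - (u+1) = u by omega]
      rw [hval] at hpq2
      refine mul_right_cancel₀ hXu ?_
      rw [hpq2, matC_apply]
    · rw [Fin.eq_one_of_ne_zero k' hk']
      have hpq2 : 1 * G ((1 : Fin 2), i) ((1 : Fin 2), j) * 1 =
          Polynomial.reflect (u + (1 + u)) (Qm i j) := by
        rw [Fin.eq_one_of_ne_zero k hk, Fin.eq_one_of_ne_zero k' hk'] at hpq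
        exact hpq
      show G ((1 : Fin 2), i) ((1 : Fin 2), j) = revMat (2*u+1) Qm i j
      rw [one_mul, mul_one] at hpq2
      rw [hpq2]
      show Polynomial.reflect (u + (1 + u)) (Qm i j) = (Qm i j).reflect (2*u+1)
      rw [show u + (1 + u) = 2*u+1 by ring]

end Final

def g1equiv (u n : ℕ) :
    (Fin n ⊕ Fin (u+1) × Fin n) ≃ ((Fin u × Fin n) ⊕ (Fin 2 × Fin n)) :=
  ((Equiv.sumCongr (Equiv.refl (Fin n)) finProdFinEquiv).trans
    (finSumFinEquiv.trans ((finCongr (by ring : n + (u+1)*n = u*n + 2*n)).trans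
      (finSumFinEquiv.symm.trans
        (Equiv.sumCongr finProdFinEquiv.symm finProdFinEquiv.symm)))))

def etotal (u n : ℕ) :
    (Fin ((2*(u+1)-1)*n) ⊕ Fin n) ≃ ((Fin n ⊕ Fin (u+1) × Fin n) ⊕ Fin u × Fin n) :=
  ((Equiv.sumCongr ((Equiv.sumCongr (Equiv.refl (Fin n)) finProdFinEquiv).trans
      finSumFinEquiv) finProdFinEquiv).trans
    (finSumFinEquiv.trans ((finCongr (by
      have h : 2*(u+1)-1 = 2*u+1 := by omega
      rw [h]; ring : (n + (u+1)*n) + u*n = (2*(u+1)-1)*n + n)).trans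
      finSumFinEquiv.symm))).symm

def f2equiv (u n : ℕ) :
    (Fin n ⊕ ((Fin u × Fin n) ⊕ (Fin u × Fin n))) ≃ Fin ((2*(u+1)-1)*n) :=
  (Equiv.sumCongr (Equiv.refl (Fin n))
      ((Equiv.sumCongr finProdFinEquiv finProdFinEquiv).trans finSumFinEquiv)).trans
    (finSumFinEquiv.trans (finCongr (by
      have h : 2*(u+1)-1 = 2*u+1 := by omega
      rw [h]; ring : n + (u*n + u*n) = (2*(u+1)-1)*n)))

end Stmt10

/-- (`t = u+1 ≥ 2`.) If
`(Λ̂_t(λ)ᵀ⊗I_n)(λB+A)(Λ̂_t(λ)⊗I_n) = [[-P, λ^t P],[λ^t P, Q(λ)]]` with `P` invertible and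
`Q` of grade `2t-1`, then the modified block Kronecker pencil is a strong linearization of
the grade-`2t` matrix polynomial `P(λ) = λ^{2t} P + Q(λ)`. -/
theorem stmt_10 {F : Type} [Field F] (n u : ℕ) (hn : 0 < n) (hu : 1 ≤ u)
    (σ : F) (hσ : σ = 1 ∨ σ = -1)
    (A B : Matrix (Fin n ⊕ Fin (u+1) × Fin n) (Fin n ⊕ Fin (u+1) × Fin n) F)
    (Pm : Matrix (Fin n) (Fin n) F) (hP : IsUnit Pm.det)
    (Qm : Matrix (Fin n) (Fin n) (Polynomial F))
    (hQ : ∀ i j, (Qm i j).natDegree ≤ 2*(u+1) - 1)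
    (hcond : (LamHatB F u n)ᵀ * pencil A B * LamHatB F u n =
      twoBlock (-(matC Pm)) ((X : Polynomial F) ^ (u+1) • matC Pm)
        ((X : Polynomial F) ^ (u+1) • matC Pm) Qm) :
    IsLinearization ((2*(u+1) - 1)*n) (modBK F u n σ (pencil A B))
        ((X : Polynomial F) ^ (2*(u+1)) • matC Pm + Qm) ∧
      IsLinearization ((2*(u+1) - 1)*n) (revMat 1 (modBK F u n σ (pencil A B)))
        (revMat (2*(u+1)) ((X : Polynomial F) ^ (2*(u+1)) • matC Pm + Qm)) := by
  have hσ2 : σ * σ = 1 := by rcases hσ with h | h <;> rw [h] <;> ring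
  constructor
  · have hmaster := Stmt10.master (pencil A B) (LhatB F u n) (Stmt10.Nm1 F u n)
      (LamHatB F u n) (Matrix.fromRows (LhatB F u n) (Stmt10.Rsel1 F u n)) σ hσ2
      (Stmt10.g1equiv u n) (Stmt10.W1inv u n) (Stmt10.C1 u n) (Stmt10.C2 u n)
    rw [hcond] at hmaster
    have hz := (Stmt10.MEq_twoBlock _ _ _ _).trans (Stmt10.Zred1 u n Pm hP Qm)
    have h3 := hmaster.trans hz.fromBlocks_congr
    have h4 := h3.trans (Stmt10.MEq_nested _)
    have h5 := h4.trans (Stmt10.MEq_reindex_one (Stmt10.f2equiv u n) _)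
    exact Stmt10.isLinearization_of_MEq (Stmt10.etotal u n) h5
  · have hrev := Stmt10.rev_modBK u n σ (pencil A B)
    rw [Stmt10.rev_pencil] at hrev
    have hmaster := Stmt10.master (pencil B A) (Stmt10.Ktil F u n) (Stmt10.Nm2 F u n)
      (LamTildeB F u n) (Matrix.fromRows (Stmt10.Ktil F u n) (Stmt10.Rsel2 F u n)) σ hσ2
      (Stmt10.g1equiv u n) (Stmt10.W2inv u n) (Stmt10.C1' u n) (Stmt10.C2' u n)
    rw [Stmt10.Ztilde u n A B Pm Qm hcond] at hmaster
    rw [← hrev] at hmaster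
    have hz := (Stmt10.MEq_twoBlock _ _ _ _).trans
      (Stmt10.Zred2 u n Pm hP (revMat (2*u+1) Qm))
    have h3 := hmaster.trans hz.fromBlocks_congr
    have h4 := h3.trans (Stmt10.MEq_nested _)
    have h5 := h4.trans (Stmt10.MEq_reindex_one (Stmt10.f2equiv u n) _)
    rw [Stmt10.revP_eq u n Pm Qm hQ]
    exact Stmt10.isLinearization_of_MEq (Stmt10.etotal u n) h5
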